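/- Let λ > 0, σ > 0 and a ∈ ℝ with a ≠ 0, and set μ = λσ/|a|. The pushforward, under the map x ↦ 1/x from (0,∞) to (0,∞), of the Borel measure on (0,∞) with Lebesgue density x ↦ (λ/√(2π)) · exp(λ|a|/σ) · x^{−1/2} · exp(−λ²x/2 − a²/(2σ²x)) equals the Borel measure on (0,∞) with Lebesgue density z ↦ (λ/√(2π)) · z^{−3/2} · exp(−λ²(z−μ)²/(2μ²z)), i.e. the Inverse-Gaussian density with mean parameter μ and scale parameter λ². -/

import Mathlib

open MeasureTheory Real Set

lemma map_withDensity_comp (ν : Measure ℝ) {f : ℝ → ℝ} (hf : Measurable f)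
    {g : ℝ → ENNReal} (hg : Measurable g) :
    Measure.map f (ν.withDensity (g ∘ f)) = (Measure.map f ν).withDensity g := by
  ext t ht
  rw [Measure.map_apply hf ht, withDensity_apply _ (hf ht), withDensity_apply _ ht,
    setLIntegral_map ht hg hf]
  rfl

lemma density_identity (lam σ a x : ℝ) (hlam : 0 < lam) (hσ : 0 < σ) (ha : a ≠ 0)
    (hx : 0 < x) :
    lam / Real.sqrt (2 * π) * Real.exp (lam * |a| / σ) * x ^ (-(1 : ℝ) / 2) *
        Real.exp (-(lam ^ 2 * x) / 2 - a ^ 2 / (2 * σ ^ 2 * x))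
      = (x ^ 2)⁻¹ * (lam / Real.sqrt (2 * π) * (1 / x) ^ (-(3 : ℝ) / 2) *
          Real.exp (-(lam ^ 2 * (1 / x - lam * σ / |a|) ^ 2) /
            (2 * (lam * σ / |a|) ^ 2 * (1 / x)))) := by
  have hb : 0 < |a| := abs_pos.mpr ha
  have ha2 : a ^ 2 = |a| ^ 2 := (sq_abs a).symm
  have h1 : (1 / x) ^ (-(3 : ℝ) / 2) = x ^ ((3 : ℝ) / 2) := by
    rw [one_div, Real.inv_rpow hx.le, ← Real.rpow_neg hx.le]
    norm_num
  have h2 : x ^ (-(1 : ℝ) / 2) = (x ^ 2)⁻¹ * x ^ ((3 : ℝ) / 2) := by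
    rw [← Real.rpow_natCast x 2, ← Real.rpow_neg hx.le, ← Real.rpow_add hx]
    norm_num
  rw [h1, h2]
  have h3 : Real.exp (lam * |a| / σ) * Real.exp (-(lam ^ 2 * x) / 2 - a ^ 2 / (2 * σ ^ 2 * x))
      = Real.exp (-(lam ^ 2 * (1 / x - lam * σ / |a|) ^ 2) /
          (2 * (lam * σ / |a|) ^ 2 * (1 / x))) := by
    rw [← Real.exp_add]
    congr 1
    rw [ha2]
    generalize hb' : |a| = b at *
    have hbpos : 0 < b := hb' ▸ hb
    field_simp
    ring
  rw [← h3]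
  ring

lemma image_one_div_Ioi : (fun x : ℝ => 1 / x) '' Ioi 0 = Ioi 0 := by
  ext z
  constructor
  · rintro ⟨x, hx, rfl⟩
    exact one_div_pos.mpr (mem_Ioi.mp hx)
  · intro hz
    exact ⟨1 / z, mem_Ioi.mpr (one_div_pos.mpr (mem_Ioi.mp hz)), by field_simp⟩

theorem map_inv_recip_inverseGaussian (lam σ a : ℝ) (hlam : 0 < lam) (hσ : 0 < σ)
    (ha : a ≠ 0) :
    Measure.map (fun x : ℝ => 1 / x)
      ((volume : Measure ℝ).withDensity (fun x => ENNReal.ofReal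
        (if 0 < x then
          lam / Real.sqrt (2 * π) * Real.exp (lam * |a| / σ) * x ^ (-(1 : ℝ) / 2) *
            Real.exp (-(lam ^ 2 * x) / 2 - a ^ 2 / (2 * σ ^ 2 * x))
        else 0)))
    = (volume : Measure ℝ).withDensity (fun z => ENNReal.ofReal
        (if 0 < z then
          lam / Real.sqrt (2 * π) * z ^ (-(3 : ℝ) / 2) *
            Real.exp (-(lam ^ 2 * (z - lam * σ / |a|) ^ 2) /
              (2 * (lam * σ / |a|) ^ 2 * z))
        else 0)) := by
  set f : ℝ → ℝ := fun x => 1 / x with hf_def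
  have hf : Measurable f := by
    simp only [hf_def, one_div]; exact measurable_inv
  set g1 : ℝ → ENNReal := fun x => ENNReal.ofReal
    (if 0 < x then
      lam / Real.sqrt (2 * π) * Real.exp (lam * |a| / σ) * x ^ (-(1 : ℝ) / 2) *
        Real.exp (-(lam ^ 2 * x) / 2 - a ^ 2 / (2 * σ ^ 2 * x))
    else 0) with hg1_def
  set g2 : ℝ → ENNReal := fun z => ENNReal.ofReal
    (if 0 < z then
      lam / Real.sqrt (2 * π) * z ^ (-(3 : ℝ) / 2) *
        Real.exp (-(lam ^ 2 * (z - lam * σ / |a|) ^ 2) /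
          (2 * (lam * σ / |a|) ^ 2 * z))
    else 0) with hg2_def
  have hg2 : Measurable g2 := by
    rw [hg2_def]
    apply Measurable.ennreal_ofReal
    apply Measurable.ite measurableSet_Ioi _ measurable_const
    fun_prop
  have hs : MeasurableSet (Ioi (0:ℝ)) := measurableSet_Ioi
  have hind1 : g1 = (Ioi (0:ℝ)).indicator g1 := by
    funext x
    rw [Set.indicator_apply]
    split_ifs with h1
    · rfl
    · have h2 : ¬ (0:ℝ) < x := by simpa using h1
      simp only [hg1_def, if_neg h2, ENNReal.ofReal_zero]
  have hind2 : g2 = (Ioi (0:ℝ)).indicator g2 := by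
    funext x
    rw [Set.indicator_apply]
    split_ifs with h1
    · rfl
    · have h2 : ¬ (0:ℝ) < x := by simpa using h1
      simp only [hg2_def, if_neg h2, ENNReal.ofReal_zero]
  set d : ℝ → ENNReal := fun x => ENNReal.ofReal ((x ^ 2)⁻¹) with hd_def
  have hd : Measurable d := by fun_prop
  have hcongr : (volume.restrict (Ioi (0:ℝ))).withDensity g1
      = (volume.restrict (Ioi (0:ℝ))).withDensity (d * (g2 ∘ f)) := by
    apply withDensity_congr_ae
    rw [Filter.EventuallyEq, ae_restrict_iff' hs]
    filter_upwards with x hx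
    have hx' : (0:ℝ) < x := hx
    have hfx : (0:ℝ) < 1 / x := one_div_pos.mpr hx'
    simp only [hg1_def, hg2_def, hd_def, Pi.mul_apply, Function.comp_apply, hf_def,
      if_pos hx', if_pos hfx]
    rw [← ENNReal.ofReal_mul (by positivity)]
    exact congrArg ENNReal.ofReal (density_identity lam σ a x hlam hσ ha hx')
  have hderiv : ∀ x ∈ Ioi (0:ℝ), HasFDerivWithinAt f
      ((1 : ℝ →L[ℝ] ℝ).smulRight (-(x ^ 2)⁻¹)) (Ioi 0) x := by
    intro x hx
    have : HasDerivAt f (-(x ^ 2)⁻¹) x := by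
      simpa only [hf_def, one_div] using hasDerivAt_inv (ne_of_gt hx)
    exact this.hasDerivWithinAt.hasFDerivWithinAt
  have hinj : Set.InjOn f (Ioi 0) := by
    intro x hx y hy h
    simp only [hf_def, one_div] at h
    exact inv_injective h
  have himg : f '' Ioi 0 = Ioi 0 := by rw [hf_def]; exact image_one_div_Ioi
  have hmap : Measure.map f ((volume.restrict (Ioi (0:ℝ))).withDensity d)
      = volume.restrict (Ioi (0:ℝ)) := by
    have h := map_withDensity_abs_det_fderiv_eq_addHaar volume hs.nullMeasurableSet hderiv hinj
    simp only [ContinuousLinearMap.smulRight_one_eq_toSpanSingleton, ContinuousLinearMap.det_toSpanSingleton] at h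
    rw [show (fun x : ℝ => ENNReal.ofReal |(-(x ^ 2)⁻¹)|) = d by
      funext x; rw [hd_def]; congr 1; rw [abs_neg, abs_inv, abs_pow, sq_abs]] at h
    rw [himg] at h
    exact h
  calc Measure.map f (volume.withDensity g1)
      = Measure.map f ((volume.restrict (Ioi 0)).withDensity g1) := by
        rw [← withDensity_indicator hs, ← hind1]
    _ = Measure.map f (((volume.restrict (Ioi 0)).withDensity d).withDensity (g2 ∘ f)) := by
        rw [hcongr, withDensity_mul _ hd (hg2.comp hf)]
    _ = (Measure.map f ((volume.restrict (Ioi 0)).withDensity d)).withDensity g2 :=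
        map_withDensity_comp _ hf hg2
    _ = (volume.restrict (Ioi 0)).withDensity g2 := by rw [hmap]
    _ = volume.withDensity g2 := by rw [← withDensity_indicator hs, ← hind2]
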